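/- arXiv:2404.01947 — 3 statements merged into one kernel-verified Lean document; each statement's English description precedes it below -/
import Mathlib

section
/- Let n ≥ 1 and let u : ℂⁿ → ℂ be measurable with ∫_{|z|<r₁} |u(z)|² dv_z < ∞ for some r₁ > 0, and suppose u vanishes to infinite order in the L² sense at 0. Then for every M > 0, the function z ↦ u(z)/|z|^M is square integrable on some ball {|z| < r} with r > 0, and it vanishes to infinite order in the L² sense at 0. -/
open MeasureTheory Metric Filter Topology

noncomputable section

/-- The Borel σ-algebra on `ℂⁿ` (as `EuclideanSpace`). -/
instance (n : ℕ) : MeasurableSpace (EuclideanSpace ℂ (Fin n)) := MeasurableSpace.comap WithLp.ofLp MeasurableSpace.pi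

instance (n : ℕ) : BorelSpace (EuclideanSpace ℂ (Fin n)) := PiLp.borelSpace 2 (X := fun _ : Fin n => ℂ)

/-- Lebesgue measure on `ℂⁿ ≅ ℝ^{2n}` (as `EuclideanSpace`). -/
instance (n : ℕ) : MeasureSpace (EuclideanSpace ℂ (Fin n)) :=
  ⟨(volume : Measure (Fin n → ℂ)).map (WithLp.equiv 2 (Fin n → ℂ)).symm⟩

/-- Auxiliary arithmetic identity for the dyadic decomposition. -/
lemma stmt4_arith (M r : ℝ) (hr : 0 < r) (m k : ℕ) :
    (r / 2^(k+1)) ^ (-(2*M)) * (r / 2^k) ^ (m:ℝ)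
      = (2 ^ (2*M) * r ^ ((m:ℝ) - 2*M)) * ((2:ℝ) ^ (-((m:ℝ) - 2*M)))^k := by
  have h2 : (0:ℝ) < 2 := two_pos
  have hp1 : (0:ℝ) < r / 2^(k+1) := by positivity
  have hp2 : (0:ℝ) < r / 2^k := by positivity
  rw [Real.rpow_def_of_pos hp1, Real.rpow_def_of_pos hp2, Real.rpow_def_of_pos h2,
    Real.rpow_def_of_pos h2, Real.rpow_def_of_pos hr, ← Real.exp_nat_mul,
    ← Real.exp_add, ← Real.exp_add, ← Real.exp_add, Real.exp_eq_exp,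
    Real.log_div hr.ne' (by positivity), Real.log_div hr.ne' (by positivity),
    Real.log_pow, Real.log_pow]
  push_cast
  ring

/-- if `u` is square integrable near `0 ∈ ℂⁿ` and vanishes to infinite
order in the `L²` sense at `0`, then for every `M > 0` so does `u z / |z|^M`. -/
theorem stmt4 (n : ℕ) (hn : 1 ≤ n) (u : EuclideanSpace ℂ (Fin n) → ℂ)
    (hmeas : Measurable u) (r₁ : ℝ) (hr₁ : 0 < r₁)
    (hint : IntegrableOn (fun z => ‖u z‖ ^ 2) (ball (0 : EuclideanSpace ℂ (Fin n)) r₁))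
    (hflat : ∀ m : ℕ, 1 ≤ m →
      Tendsto (fun r : ℝ => (∫ z in ball (0 : EuclideanSpace ℂ (Fin n)) r, ‖u z‖ ^ 2) / r ^ m)
        (𝓝[>] 0) (𝓝 0)) :
    ∀ M : ℝ, 0 < M →
      (∃ r : ℝ, 0 < r ∧
        IntegrableOn (fun z => ‖(‖z‖ ^ M)⁻¹ • u z‖ ^ 2)
          (ball (0 : EuclideanSpace ℂ (Fin n)) r)) ∧
      (∀ m : ℕ, 1 ≤ m →
        Tendsto
          (fun r : ℝ =>
            (∫ z in ball (0 : EuclideanSpace ℂ (Fin n)) r, ‖(‖z‖ ^ M)⁻¹ • u z‖ ^ 2) / r ^ m)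
          (𝓝[>] 0) (𝓝 0)) := by
  intro M hM
  -- measurability of the weighted function
  have hGmeas : Measurable
      (fun z : EuclideanSpace ℂ (Fin n) => ‖(‖z‖ ^ M)⁻¹ • u z‖ ^ 2) := by
    simp only [Complex.real_smul]
    have h1 : Measurable (fun z : EuclideanSpace ℂ (Fin n) => (‖z‖ ^ M)⁻¹) :=
      (continuous_norm.rpow_const (fun x => Or.inr hM.le)).measurable.inv
    exact (((Complex.measurable_ofReal.comp h1).mul hmeas).norm).pow_const 2
  -- Step 1 : eventual polynomial bound on the lintegral of ‖u‖²
  have step1 : ∀ m : ℕ, 1 ≤ m → ∃ δ : ℝ, 0 < δ ∧ δ ≤ r₁ ∧ ∀ ρ : ℝ, 0 < ρ → ρ < δ →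
      ∫⁻ z in ball (0 : EuclideanSpace ℂ (Fin n)) ρ, ENNReal.ofReal (‖u z‖ ^ 2)
        ≤ ENNReal.ofReal (ρ ^ (m:ℝ)) := by
    intro m hm
    have h := (hflat m hm).eventually_lt_const (one_pos (α := ℝ))
    obtain ⟨ε, hε, hsub⟩ := mem_nhdsGT_iff_exists_Ioo_subset.mp h
    refine ⟨min ε r₁, lt_min hε hr₁, min_le_right _ _, ?_⟩
    intro ρ hρ hρδ
    have hρε : ρ ∈ Set.Ioo (0:ℝ) ε := ⟨hρ, lt_of_lt_of_le hρδ (min_le_left _ _)⟩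
    have hdiv := hsub hρε
    have hρm : (0:ℝ) < ρ ^ m := by positivity
    have hle : (∫ z in ball (0 : EuclideanSpace ℂ (Fin n)) ρ, ‖u z‖ ^ 2) ≤ ρ ^ (m:ℝ) := by
      rw [Real.rpow_natCast]
      exact le_of_lt ((div_lt_one hρm).mp hdiv)
    have hint' : IntegrableOn (fun z => ‖u z‖ ^ 2) (ball (0 : EuclideanSpace ℂ (Fin n)) ρ) :=
      hint.mono_set (ball_subset_ball (le_trans hρδ.le (min_le_right _ _)))
    rw [← ofReal_integral_eq_lintegral_ofReal hint'
      (Filter.Eventually.of_forall fun z => sq_nonneg _)]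
    exact ENNReal.ofReal_le_ofReal hle
  -- Key dyadic estimate
  have key : ∀ m : ℕ, 2*M + 1 ≤ (m:ℝ) → ∀ δ : ℝ, 0 < δ →
      (∀ ρ : ℝ, 0 < ρ → ρ < δ →
        ∫⁻ z in ball (0 : EuclideanSpace ℂ (Fin n)) ρ, ENNReal.ofReal (‖u z‖ ^ 2)
          ≤ ENNReal.ofReal (ρ ^ (m:ℝ))) →
      ∃ C : ℝ, 0 < C ∧ ∀ r : ℝ, 0 < r → r < δ →
        ∫⁻ z in ball (0 : EuclideanSpace ℂ (Fin n)) r,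
            ENNReal.ofReal (‖(‖z‖ ^ M)⁻¹ • u z‖ ^ 2)
          ≤ ENNReal.ofReal (C * r ^ ((m:ℝ) - 2*M)) := by
    intro m hm δ hδ hbound
    set p : ℝ := (m:ℝ) - 2*M with hpdef
    have hp1 : 1 ≤ p := by simp only [hpdef]; linarith
    have hp0 : 0 < p := by linarith
    set q : ℝ := (2:ℝ) ^ (-p) with hqdef
    have hq0 : 0 < q := Real.rpow_pos_of_pos two_pos _
    have hq1 : q < 1 := Real.rpow_lt_one_of_one_lt_of_neg one_lt_two (by linarith)
    refine ⟨(2:ℝ) ^ (2*M) * (1 - q)⁻¹,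
      mul_pos (Real.rpow_pos_of_pos two_pos _) (inv_pos.mpr (by linarith)), ?_⟩
    intro r hr hrδ
    set A : ℕ → Set (EuclideanSpace ℂ (Fin n)) := fun k =>
      ball (0 : EuclideanSpace ℂ (Fin n)) (r/2^k) \
        ball (0 : EuclideanSpace ℂ (Fin n)) (r/2^(k+1)) with hAdef
    -- covering
    have hcover : ball (0 : EuclideanSpace ℂ (Fin n)) r ⊆
        {(0 : EuclideanSpace ℂ (Fin n))} ∪ ⋃ k, A k := by
      intro z hz
      rcases eq_or_ne z 0 with h0 | h0
      · exact Or.inl (by simp [h0])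
      · right
        have hz0 : 0 < ‖z‖ := norm_pos_iff.mpr h0
        have hzr : ‖z‖ < r := mem_ball_zero_iff.mp hz
        have hex : ∃ k : ℕ, r / 2^(k+1) ≤ ‖z‖ := by
          obtain ⟨k, hk⟩ := exists_pow_lt_of_lt_one (div_pos hz0 hr)
            (by norm_num : (1:ℝ)/2 < 1)
          have h2 : r / 2^(k+1) ≤ r / 2^k :=
            div_le_div_of_nonneg_left hr.le (by positivity)
              (pow_le_pow_right₀ one_le_two (Nat.le_succ k))
          have h1 : (1/2:ℝ)^k * r < ‖z‖ := (lt_div_iff₀ hr).mp hk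
          have h3 : r / 2^k < ‖z‖ := by
            calc r / 2^k = (1/2:ℝ)^k * r := by
                  rw [one_div, inv_pow, inv_mul_eq_div]
              _ < ‖z‖ := h1
          exact ⟨k, le_of_lt (lt_of_le_of_lt h2 h3)⟩
        set k := Nat.find hex with hkdef
        have hk1 : r / 2^(k+1) ≤ ‖z‖ := Nat.find_spec hex
        have hk2 : ‖z‖ < r / 2^k := by
          rcases Nat.eq_zero_or_pos k with h | h
          · rw [h]; simpa using hzr
          · obtain ⟨j, hj⟩ := Nat.exists_eq_succ_of_ne_zero h.ne'
            have hmin : ¬ (r / 2^(j+1) ≤ ‖z‖) := Nat.find_min hex (by omega)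
            rw [hj]
            exact not_le.mp hmin
        exact Set.mem_iUnion.mpr ⟨k, mem_ball_zero_iff.mpr hk2,
          fun hmem => absurd (mem_ball_zero_iff.mp hmem) (not_lt.mpr hk1)⟩
    -- pointwise bound on each annulus
    have hptwise : ∀ k : ℕ, ∀ z ∈ A k,
        ‖(‖z‖ ^ M)⁻¹ • u z‖ ^ 2 ≤ (r/2^(k+1)) ^ (-(2*M)) * ‖u z‖ ^ 2 := by
      intro k z hz
      have hs : (0:ℝ) < r/2^(k+1) := by positivity
      have hzs : r/2^(k+1) ≤ ‖z‖ := by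
        have := hz.2
        simpa [mem_ball_zero_iff, not_lt] using this
      have hnorm : ‖(‖z‖ ^ M)⁻¹ • u z‖ = (‖z‖ ^ M)⁻¹ * ‖u z‖ := by
        rw [norm_smul, Real.norm_eq_abs, abs_of_nonneg (by positivity)]
      rw [hnorm, mul_pow]
      have h1 : (‖z‖ ^ M)⁻¹ ≤ ((r/2^(k+1)) ^ M)⁻¹ :=
        inv_anti₀ (Real.rpow_pos_of_pos hs _)
          (Real.rpow_le_rpow hs.le hzs hM.le)
      have h2 : (((r/2^(k+1)) ^ M)⁻¹) ^ 2 = (r/2^(k+1)) ^ (-(2*M)) := by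
        rw [← Real.rpow_neg hs.le, ← Real.rpow_natCast ((r/2^(k+1)) ^ (-M)) 2,
          ← Real.rpow_mul hs.le]
        norm_num
        congr 1
        ring
      calc ((‖z‖ ^ M)⁻¹) ^ 2 * ‖u z‖ ^ 2
          ≤ (((r/2^(k+1)) ^ M)⁻¹) ^ 2 * ‖u z‖ ^ 2 := by
            apply mul_le_mul_of_nonneg_right _ (sq_nonneg _)
            exact pow_le_pow_left₀ (by positivity) h1 2
        _ = (r/2^(k+1)) ^ (-(2*M)) * ‖u z‖ ^ 2 := by rw [h2]
    -- lintegral on each annulus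
    have hann : ∀ k : ℕ, ∫⁻ z in A k, ENNReal.ofReal (‖(‖z‖ ^ M)⁻¹ • u z‖ ^ 2)
        ≤ ENNReal.ofReal (((2:ℝ) ^ (2*M) * r ^ p) * q ^ k) := by
      intro k
      have hmble : Measurable (fun z : EuclideanSpace ℂ (Fin n) =>
          ENNReal.ofReal ((r/2^(k+1)) ^ (-(2*M))) * ENNReal.ofReal (‖u z‖ ^ 2)) :=
        measurable_const.mul (ENNReal.measurable_ofReal.comp ((hmeas.norm).pow_const 2))
      calc ∫⁻ z in A k, ENNReal.ofReal (‖(‖z‖ ^ M)⁻¹ • u z‖ ^ 2)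
          ≤ ∫⁻ z in A k, ENNReal.ofReal ((r/2^(k+1)) ^ (-(2*M)))
              * ENNReal.ofReal (‖u z‖ ^ 2) := by
            apply setLIntegral_mono hmble
            intro z hz
            rw [← ENNReal.ofReal_mul (by positivity)]
            exact ENNReal.ofReal_le_ofReal (hptwise k z hz)
        _ = ENNReal.ofReal ((r/2^(k+1)) ^ (-(2*M)))
              * ∫⁻ z in A k, ENNReal.ofReal (‖u z‖ ^ 2) :=
            lintegral_const_mul' _ _ ENNReal.ofReal_ne_top
        _ ≤ ENNReal.ofReal ((r/2^(k+1)) ^ (-(2*M))) * ENNReal.ofReal ((r/2^k) ^ (m:ℝ)) := by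
            gcongr
            refine le_trans (lintegral_mono_set (fun z hz => hz.1))
              (hbound _ (by positivity) (lt_of_le_of_lt ?_ hrδ))
            exact div_le_self hr.le (one_le_pow₀ one_le_two)
        _ = ENNReal.ofReal (((2:ℝ) ^ (2*M) * r ^ p) * q ^ k) := by
            rw [← ENNReal.ofReal_mul (by positivity), stmt4_arith M r hr m k]
    -- geometric summation
    have hsum : ∑' k : ℕ, ENNReal.ofReal (((2:ℝ) ^ (2*M) * r ^ p) * q ^ k)
        ≤ ENNReal.ofReal (((2:ℝ) ^ (2*M) * (1 - q)⁻¹) * r ^ p) := by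
      have hterm : ∀ k : ℕ, ENNReal.ofReal (((2:ℝ) ^ (2*M) * r ^ p) * q ^ k)
          = ENNReal.ofReal ((2:ℝ) ^ (2*M) * r ^ p) * (ENNReal.ofReal q) ^ k := by
        intro k
        rw [ENNReal.ofReal_mul (by positivity), ENNReal.ofReal_pow hq0.le]
      rw [tsum_congr hterm, ENNReal.tsum_mul_left, ENNReal.tsum_geometric]
      have h1 : (1 - ENNReal.ofReal q)⁻¹ = ENNReal.ofReal ((1 - q)⁻¹) := by
        rw [← ENNReal.ofReal_one, ← ENNReal.ofReal_sub _ hq0.le,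
          ENNReal.ofReal_inv_of_pos (by linarith)]
      rw [h1, ← ENNReal.ofReal_mul (by positivity)]
      exact ENNReal.ofReal_le_ofReal (le_of_eq (by ring))
    -- combine
    have hzero : ∫⁻ z in ({(0 : EuclideanSpace ℂ (Fin n))} :
        Set (EuclideanSpace ℂ (Fin n))), ENNReal.ofReal (‖(‖z‖ ^ M)⁻¹ • u z‖ ^ 2) = 0 := by
      rw [lintegral_singleton]
      simp [Real.zero_rpow hM.ne']
    calc ∫⁻ z in ball (0 : EuclideanSpace ℂ (Fin n)) r,
          ENNReal.ofReal (‖(‖z‖ ^ M)⁻¹ • u z‖ ^ 2)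
        ≤ ∫⁻ z in ({(0 : EuclideanSpace ℂ (Fin n))} ∪ ⋃ k, A k),
            ENNReal.ofReal (‖(‖z‖ ^ M)⁻¹ • u z‖ ^ 2) := lintegral_mono_set hcover
      _ ≤ (∫⁻ z in ({(0 : EuclideanSpace ℂ (Fin n))} :
            Set (EuclideanSpace ℂ (Fin n))), ENNReal.ofReal (‖(‖z‖ ^ M)⁻¹ • u z‖ ^ 2))
          + ∫⁻ z in ⋃ k, A k, ENNReal.ofReal (‖(‖z‖ ^ M)⁻¹ • u z‖ ^ 2) :=
            lintegral_union_le _ _ _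
      _ ≤ 0 + ∑' k : ℕ, ∫⁻ z in A k, ENNReal.ofReal (‖(‖z‖ ^ M)⁻¹ • u z‖ ^ 2) := by
            gcongr
            · exact le_of_eq hzero
            · exact lintegral_iUnion_le _ _
      _ ≤ 0 + ∑' k : ℕ, ENNReal.ofReal (((2:ℝ) ^ (2*M) * r ^ p) * q ^ k) := by
            gcongr with k
            exact hann k
      _ ≤ ENNReal.ofReal (((2:ℝ) ^ (2*M) * (1 - q)⁻¹) * r ^ p) := by
            rw [zero_add]; exact hsum
  -- assemble the two conclusions
  constructor
  · -- integrability near 0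
    set m₀ : ℕ := ⌈2*M⌉₊ + 1 with hm₀def
    have hm₀ : 2*M + 1 ≤ (m₀:ℝ) := by
      have := Nat.le_ceil (2*M)
      push_cast [hm₀def]
      linarith
    obtain ⟨δ, hδ, hδr₁, hbound⟩ := step1 m₀ (by omega)
    obtain ⟨C, hC, hkey⟩ := key m₀ hm₀ δ hδ hbound
    refine ⟨δ/2, by positivity, ?_⟩
    refine ⟨hGmeas.aestronglyMeasurable, ?_⟩
    rw [hasFiniteIntegral_iff_ofReal (ae_of_all _ (fun z => sq_nonneg _))]
    exact lt_of_le_of_lt (hkey (δ/2) (by positivity) (by linarith)) ENNReal.ofReal_lt_top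
  · -- flatness
    intro m hm
    set m₀ : ℕ := ⌈2*M⌉₊ + m + 1 with hm₀def
    have hcl := Nat.le_ceil (2*M)
    have hm₀ : 2*M + 1 ≤ (m₀:ℝ) := by push_cast [hm₀def]; linarith
    have hm₀' : 2*M + (m:ℝ) + 1 ≤ (m₀:ℝ) := by push_cast [hm₀def]; linarith
    obtain ⟨δ, hδ, hδr₁, hbound⟩ := step1 m₀ (by omega)
    obtain ⟨C, hC, hkey⟩ := key m₀ hm₀ δ hδ hbound
    set p : ℝ := (m₀:ℝ) - 2*M with hpdef
    have hpm : (m:ℝ) + 1 ≤ p := by simp only [hpdef]; linarith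
    apply squeeze_zero' (g := fun r : ℝ => C * r)
    · filter_upwards [self_mem_nhdsWithin] with r hr
      have hr' : (0:ℝ) < r := hr
      apply div_nonneg _ (by positivity)
      exact integral_nonneg (fun z => sq_nonneg _)
    · filter_upwards [Ioo_mem_nhdsGT_of_mem
        (Set.mem_Ico.mpr ⟨le_refl (0:ℝ), lt_min hδ one_pos⟩)] with r hr
      obtain ⟨hr0, hrlt⟩ := hr
      have hrδ : r < δ := lt_of_lt_of_le hrlt (min_le_left _ _)
      have hr1 : r ≤ 1 := le_of_lt (lt_of_lt_of_le hrlt (min_le_right _ _))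
      have hI : (∫ z in ball (0 : EuclideanSpace ℂ (Fin n)) r, ‖(‖z‖ ^ M)⁻¹ • u z‖ ^ 2)
          = (∫⁻ z in ball (0 : EuclideanSpace ℂ (Fin n)) r,
              ENNReal.ofReal (‖(‖z‖ ^ M)⁻¹ • u z‖ ^ 2)).toReal :=
        integral_eq_lintegral_of_nonneg_ae (ae_of_all _ (fun z => sq_nonneg _))
          hGmeas.aestronglyMeasurable
      have h2 : (∫ z in ball (0 : EuclideanSpace ℂ (Fin n)) r, ‖(‖z‖ ^ M)⁻¹ • u z‖ ^ 2)
          ≤ C * r ^ p := by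
        rw [hI]
        calc (∫⁻ z in ball (0 : EuclideanSpace ℂ (Fin n)) r,
              ENNReal.ofReal (‖(‖z‖ ^ M)⁻¹ • u z‖ ^ 2)).toReal
            ≤ (ENNReal.ofReal (C * r ^ p)).toReal :=
              ENNReal.toReal_mono ENNReal.ofReal_ne_top (hkey r hr0 hrδ)
          _ = C * r ^ p := ENNReal.toReal_ofReal (by positivity)
      have hpow : (0:ℝ) < r ^ m := by positivity
      calc (∫ z in ball (0 : EuclideanSpace ℂ (Fin n)) r, ‖(‖z‖ ^ M)⁻¹ • u z‖ ^ 2) / r ^ m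
          ≤ (C * r ^ p) / r ^ m := by gcongr
        _ = C * r ^ (p - (m:ℝ)) := by
            rw [mul_div_assoc, ← Real.rpow_natCast r m, ← Real.rpow_sub hr0]
        _ ≤ C * r := by
            have : r ^ (p - (m:ℝ)) ≤ r ^ (1:ℝ) :=
              Real.rpow_le_rpow_of_exponent_ge hr0 hr1 (by linarith)
            rw [Real.rpow_one] at this
            exact mul_le_mul_of_nonneg_left this hC.le
    · have : Tendsto (fun r : ℝ => C * r) (𝓝 0) (𝓝 (C * 0)) :=
        (continuous_const.mul continuous_id).tendsto 0
      simpa [mul_zero] using this.mono_left nhdsWithin_le_nhds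
end
end

section
/- Let Ω be a bounded domain in ℂⁿ (n ≥ 1) and let α, β > 0 satisfy α + β = 2n. Then there exists a constant C > 0 such that for every z ∈ Ω with z ≠ 0, ∫_Ω |ζ|^{−α} |ζ − z|^{−β} dv_ζ ≤ C·(1 + |ln |z||). -/
open MeasureTheory Metric Filter Topology

noncomputable section

open Set
open scoped ENNReal

section Aux

lemma rpow_arith {s γ δ : ℝ} (hs : 0 < s) (k : ℕ) :
    (s / 2^(k+1)) ^ (-γ) * (s / 2^k) ^ δ = 2^γ * s^(δ-γ) * ((2:ℝ)^(γ-δ))^k := by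
  have h1 : (0:ℝ) < s / 2^(k+1) := by positivity
  have h2 : (0:ℝ) < s / 2^k := by positivity
  rw [← Real.rpow_natCast ((2:ℝ)^(γ-δ)) k,
    Real.rpow_def_of_pos h1, Real.rpow_def_of_pos h2,
    Real.rpow_def_of_pos (Real.rpow_pos_of_pos two_pos _),
    Real.rpow_def_of_pos two_pos, Real.rpow_def_of_pos hs,
    Real.log_rpow two_pos,
    Real.log_div hs.ne' (by positivity), Real.log_div hs.ne' (by positivity),
    Real.log_pow, Real.log_pow,
    ← Real.exp_add, ← Real.exp_add, ← Real.exp_add]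
  congr 1
  push_cast
  ring

lemma rpow_arith2 {s γ δ : ℝ} (hs : 0 < s) (k : ℕ) :
    (s * 2^k) ^ (-γ) * (s * 2^(k+1)) ^ δ = 2^δ * s^(δ-γ) * ((2:ℝ)^(δ-γ))^k := by
  have h1 : (0:ℝ) < s * 2^k := by positivity
  have h2 : (0:ℝ) < s * 2^(k+1) := by positivity
  rw [← Real.rpow_natCast ((2:ℝ)^(δ-γ)) k,
    Real.rpow_def_of_pos h1, Real.rpow_def_of_pos h2,
    Real.rpow_def_of_pos (Real.rpow_pos_of_pos two_pos _),
    Real.rpow_def_of_pos two_pos, Real.rpow_def_of_pos hs,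
    Real.log_rpow two_pos,
    Real.log_mul hs.ne' (by positivity), Real.log_mul hs.ne' (by positivity),
    Real.log_pow, Real.log_pow,
    ← Real.exp_add, ← Real.exp_add, ← Real.exp_add]
  congr 1
  push_cast
  ring

lemma young_ineq {a b α β : ℝ} (ha : 0 < a) (hb : 0 < b) (hα : 0 < α) (hβ : 0 < β) :
    a ^ (-α) * b ^ (-β) ≤ a ^ (-(α+β)) + b ^ (-(α+β)) := by
  rcases le_total a b with h | h
  · calc a^(-α) * b^(-β) ≤ a^(-α) * a^(-β) :=
          mul_le_mul_of_nonneg_left (Real.rpow_le_rpow_of_nonpos ha h (by linarith))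
            (Real.rpow_nonneg ha.le _)
      _ = a^(-(α+β)) := by rw [← Real.rpow_add ha]; ring_nf
      _ ≤ a^(-(α+β)) + b^(-(α+β)) := le_add_of_nonneg_right (Real.rpow_nonneg hb.le _)
  · calc a^(-α) * b^(-β) ≤ b^(-α) * b^(-β) :=
          mul_le_mul_of_nonneg_right (Real.rpow_le_rpow_of_nonpos hb h (by linarith))
            (Real.rpow_nonneg hb.le _)
      _ = b^(-(α+β)) := by rw [← Real.rpow_add hb]; ring_nf
      _ ≤ a^(-(α+β)) + b^(-(α+β)) := le_add_of_nonneg_left (Real.rpow_nonneg ha.le _)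

variable {E : Type*} [NormedAddCommGroup E] [NormedSpace ℝ E] [MeasurableSpace E]
  [BorelSpace E] [FiniteDimensional ℝ E] [Nontrivial E]
  (μ : Measure E) [μ.IsAddHaarMeasure]

omit [NormedSpace ℝ E] [MeasurableSpace E] [BorelSpace E] [FiniteDimensional ℝ E]
  [Nontrivial E] in
lemma dyadic_cover {s : ℝ} (hs : 0 < s) {ζ : E} (hζ0 : ζ ≠ 0) (hζ : ‖ζ‖ < s) :
    ∃ k : ℕ, ζ ∈ ball (0:E) (s / 2^k) \ ball 0 (s / 2^(k+1)) := by
  have hn : 0 < ‖ζ‖ := norm_pos_iff.2 hζ0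
  have ht : 1 < s / ‖ζ‖ := (one_lt_div hn).2 hζ
  obtain ⟨m, hm⟩ := pow_unbounded_of_one_lt (s / ‖ζ‖) (one_lt_two (α := ℝ))
  have hex : ∃ m : ℕ, s / ‖ζ‖ ≤ 2^m := ⟨m, hm.le⟩
  have hspec : s / ‖ζ‖ ≤ 2 ^ (Nat.find hex) := Nat.find_spec hex
  have hne : Nat.find hex ≠ 0 := by
    intro h
    rw [h] at hspec
    simp at hspec
    linarith
  obtain ⟨k, hk⟩ := Nat.exists_eq_succ_of_ne_zero hne
  simp only [Nat.succ_eq_add_one] at hk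
  rw [hk] at hspec
  have hmin : ¬ (s / ‖ζ‖ ≤ 2 ^ k) := Nat.find_min hex (by omega)
  push_neg at hmin
  refine ⟨k, ?_, ?_⟩
  · rw [mem_ball_zero_iff, lt_div_iff₀ (by positivity : (0:ℝ) < 2^k)]
    have h := (lt_div_iff₀ hn).1 hmin
    linarith [mul_comm (‖ζ‖) ((2:ℝ)^k)]
  · rw [mem_ball_zero_iff, not_lt, div_le_iff₀ (by positivity : (0:ℝ) < 2^(k+1))]
    have h := (div_le_iff₀ hn).1 hspec
    linarith [mul_comm (‖ζ‖) ((2:ℝ)^(k+1))]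

omit [NormedSpace ℝ E] [MeasurableSpace E] [BorelSpace E] [FiniteDimensional ℝ E]
  [Nontrivial E] in
lemma dyadic_cover2 {s : ℝ} (hs : 0 < s) {ζ : E} (hζ : s ≤ ‖ζ‖) :
    ∃ k : ℕ, ζ ∈ ball (0:E) (s * 2^(k+1)) \ ball 0 (s * 2^k) := by
  have hn : 0 < ‖ζ‖ := lt_of_lt_of_le hs hζ
  have ht : 1 ≤ ‖ζ‖ / s := (one_le_div hs).2 hζ
  obtain ⟨m, hm⟩ := pow_unbounded_of_one_lt (‖ζ‖ / s) (one_lt_two (α := ℝ))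
  have hex : ∃ m : ℕ, ‖ζ‖ / s < 2^m := ⟨m, hm⟩
  have hspec : ‖ζ‖ / s < 2 ^ (Nat.find hex) := Nat.find_spec hex
  have hne : Nat.find hex ≠ 0 := by
    intro h
    rw [h] at hspec
    simp at hspec
    linarith
  obtain ⟨k, hk⟩ := Nat.exists_eq_succ_of_ne_zero hne
  simp only [Nat.succ_eq_add_one] at hk
  rw [hk] at hspec
  have hmin : ¬ (‖ζ‖ / s < 2 ^ k) := Nat.find_min hex (by omega)
  push_neg at hmin
  refine ⟨k, ?_, ?_⟩
  · rw [mem_ball_zero_iff]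
    have h := (div_lt_iff₀ hs).1 hspec
    linarith [mul_comm (‖ζ‖) ((2:ℝ)^(k+1)), mul_comm s ((2:ℝ)^(k+1))]
  · rw [mem_ball_zero_iff, not_lt]
    have h := (le_div_iff₀ hs).1 hmin
    linarith [mul_comm (‖ζ‖) ((2:ℝ)^k), mul_comm s ((2:ℝ)^k)]

lemma lemA {γ : ℝ} (hγ : 0 < γ) {s : ℝ} (hs : 0 < s) :
    ∫⁻ ζ in ball (0:E) s, ENNReal.ofReal (‖ζ‖ ^ (-γ)) ∂μ ≤
      ENNReal.ofReal (2 ^ γ) * (1 - ENNReal.ofReal (2 ^ (γ - (Module.finrank ℝ E : ℝ))))⁻¹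
        * μ (ball 0 1) * ENNReal.ofReal (s ^ ((Module.finrank ℝ E : ℝ) - γ)) := by
  set d : ℕ := Module.finrank ℝ E
  set A : ℕ → Set E := fun k => ball (0:E) (s / 2^k) \ ball 0 (s / 2^(k+1)) with hA
  have hcover : ball (0:E) s ⊆ {0} ∪ ⋃ k, A k := by
    intro ζ hζ
    by_cases h0 : ζ = 0
    · exact Or.inl h0
    · exact Or.inr (Set.mem_iUnion.2 (dyadic_cover hs h0 (mem_ball_zero_iff.1 hζ)))
  calc ∫⁻ ζ in ball (0:E) s, ENNReal.ofReal (‖ζ‖ ^ (-γ)) ∂μ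
      ≤ ∫⁻ ζ in ({0} ∪ ⋃ k, A k : Set E), ENNReal.ofReal (‖ζ‖ ^ (-γ)) ∂μ :=
        lintegral_mono_set hcover
    _ ≤ (∫⁻ ζ in ({0} : Set E), ENNReal.ofReal (‖ζ‖ ^ (-γ)) ∂μ)
        + ∫⁻ ζ in (⋃ k, A k), ENNReal.ofReal (‖ζ‖ ^ (-γ)) ∂μ := lintegral_union_le _ _ _
    _ ≤ 0 + ∑' k, ∫⁻ ζ in A k, ENNReal.ofReal (‖ζ‖ ^ (-γ)) ∂μ := by
        gcongr
        · rw [setLIntegral_measure_zero _ _ (measure_singleton 0)]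
        · exact lintegral_iUnion_le _ _
    _ ≤ ∑' k, ENNReal.ofReal ((s / 2^(k+1)) ^ (-γ)) * (ENNReal.ofReal ((s / 2^k) ^ ((d:ℝ))) * μ (ball 0 1)) := by
        rw [zero_add]
        refine ENNReal.tsum_le_tsum fun k => ?_
        have hb : ∀ ζ ∈ A k, ENNReal.ofReal (‖ζ‖ ^ (-γ)) ≤ ENNReal.ofReal ((s / 2^(k+1)) ^ (-γ)) := by
          intro ζ hζ
          refine ENNReal.ofReal_le_ofReal ?_
          exact Real.rpow_le_rpow_of_nonpos (by positivity)
            (by simpa [mem_ball_zero_iff, not_lt] using hζ.2) (by linarith)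
        calc ∫⁻ ζ in A k, ENNReal.ofReal (‖ζ‖ ^ (-γ)) ∂μ
            ≤ ∫⁻ _ in A k, ENNReal.ofReal ((s / 2^(k+1)) ^ (-γ)) ∂μ :=
              setLIntegral_mono' (measurableSet_ball.diff measurableSet_ball) hb
          _ = ENNReal.ofReal ((s / 2^(k+1)) ^ (-γ)) * μ (A k) := setLIntegral_const _ _
          _ ≤ _ := by
              gcongr
              calc μ (A k) ≤ μ (ball (0:E) (s / 2^k)) := measure_mono diff_subset
                _ = ENNReal.ofReal ((s / 2^k) ^ ((d:ℝ))) * μ (ball 0 1) := by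
                    rw [Measure.addHaar_ball μ 0 (by positivity : (0:ℝ) ≤ s / 2^k),
                      ← Real.rpow_natCast (s / 2^k) d]
    _ ≤ _ := by
        have hterm : ∀ k : ℕ, ENNReal.ofReal ((s / 2^(k+1)) ^ (-γ)) * (ENNReal.ofReal ((s / 2^k) ^ ((d:ℝ))) * μ (ball 0 1))
            = ENNReal.ofReal (2 ^ γ) * ENNReal.ofReal (s ^ ((d:ℝ) - γ)) * μ (ball 0 1)
              * (ENNReal.ofReal ((2:ℝ) ^ (γ - (d:ℝ))))^k := by
          intro k
          rw [← mul_assoc, ← ENNReal.ofReal_mul (by positivity), rpow_arith hs k,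
            ← ENNReal.ofReal_pow (by positivity), ENNReal.ofReal_mul (by positivity),
            ENNReal.ofReal_mul (by positivity)]
          ring
        rw [tsum_congr hterm, ENNReal.tsum_mul_left, ENNReal.tsum_geometric]
        apply le_of_eq
        ring

lemma lemB {s T : ℝ} (hs : 0 < s) (hsT : s ≤ T) :
    ∫⁻ ζ in {ζ : E | s ≤ ‖ζ‖} ∩ ball 0 T,
        ENNReal.ofReal (‖ζ‖ ^ (-(Module.finrank ℝ E : ℝ))) ∂μ ≤
      (⌈Real.logb 2 (T/s)⌉₊ : ℝ≥0∞)
        * (ENNReal.ofReal (2 ^ (Module.finrank ℝ E : ℝ)) * μ (ball 0 1)) := by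
  set d : ℕ := Module.finrank ℝ E
  set K : ℕ := ⌈Real.logb 2 (T/s)⌉₊ with hK
  set D : ℕ → Set E := fun k => (ball (0:E) (s * 2^(k+1)) \ ball 0 (s * 2^k)) ∩ ball 0 T with hD
  have hTs : (0:ℝ) < T / s := div_pos (hs.trans_le hsT) hs
  have hTK : T ≤ s * 2^K := by
    have h1 : T / s ≤ (2:ℝ) ^ (K:ℝ) := by
      calc T / s = (2:ℝ) ^ Real.logb 2 (T/s) := (Real.rpow_logb two_pos (by norm_num) hTs).symm
        _ ≤ (2:ℝ) ^ (K:ℝ) := Real.rpow_le_rpow_of_exponent_le one_le_two (Nat.le_ceil _)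
    rw [Real.rpow_natCast] at h1
    calc T = (T / s) * s := by field_simp
      _ ≤ 2^K * s := by gcongr
      _ = s * 2^K := mul_comm _ _
  have hDempty : ∀ k, K ≤ k → D k = ∅ := by
    intro k hk
    ext ζ
    simp only [hD, Set.mem_inter_iff, Set.mem_diff, mem_ball_zero_iff, Set.mem_empty_iff_false,
      iff_false, not_and, and_imp]
    intro _ h2 h3
    exfalso
    have : s * 2^K ≤ s * 2^k := by gcongr <;> norm_num
    push_neg at h2
    linarith
  have hcover : {ζ : E | s ≤ ‖ζ‖} ∩ ball 0 T ⊆ ⋃ k, D k := by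
    intro ζ hζ
    obtain ⟨k, hk⟩ := dyadic_cover2 hs hζ.1
    exact Set.mem_iUnion.2 ⟨k, hk, hζ.2⟩
  have hterm : ∀ k : ℕ, ∫⁻ ζ in D k, ENNReal.ofReal (‖ζ‖ ^ (-(d:ℝ))) ∂μ ≤
      ENNReal.ofReal (2 ^ ((d:ℝ))) * μ (ball 0 1) := by
    intro k
    have hb : ∀ ζ ∈ D k, ENNReal.ofReal (‖ζ‖ ^ (-(d:ℝ))) ≤
        ENNReal.ofReal ((s * 2^k) ^ (-(d:ℝ))) := by
      intro ζ hζ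
      refine ENNReal.ofReal_le_ofReal ?_
      exact Real.rpow_le_rpow_of_nonpos (by positivity)
        (by simpa [mem_ball_zero_iff, not_lt] using hζ.1.2) (neg_nonpos.2 (Nat.cast_nonneg d))
    calc ∫⁻ ζ in D k, ENNReal.ofReal (‖ζ‖ ^ (-(d:ℝ))) ∂μ
        ≤ ∫⁻ _ in D k, ENNReal.ofReal ((s * 2^k) ^ (-(d:ℝ))) ∂μ :=
          setLIntegral_mono' ((measurableSet_ball.diff measurableSet_ball).inter measurableSet_ball) hb
      _ = ENNReal.ofReal ((s * 2^k) ^ (-(d:ℝ))) * μ (D k) := setLIntegral_const _ _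
      _ ≤ ENNReal.ofReal ((s * 2^k) ^ (-(d:ℝ))) * (ENNReal.ofReal ((s * 2^(k+1)) ^ ((d:ℝ))) * μ (ball 0 1)) := by
          gcongr
          calc μ (D k) ≤ μ (ball (0:E) (s * 2^(k+1))) :=
                measure_mono (Set.inter_subset_left.trans diff_subset)
            _ = ENNReal.ofReal ((s * 2^(k+1)) ^ ((d:ℝ))) * μ (ball 0 1) := by
                rw [Measure.addHaar_ball μ 0 (by positivity : (0:ℝ) ≤ s * 2^(k+1)),
                  ← Real.rpow_natCast (s * 2^(k+1)) d]
      _ = ENNReal.ofReal (2 ^ ((d:ℝ))) * μ (ball 0 1) := by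
          rw [← mul_assoc, ← ENNReal.ofReal_mul (by positivity), rpow_arith2 hs k]
          norm_num
  calc ∫⁻ ζ in {ζ : E | s ≤ ‖ζ‖} ∩ ball 0 T, ENNReal.ofReal (‖ζ‖ ^ (-(d:ℝ))) ∂μ
      ≤ ∫⁻ ζ in ⋃ k, D k, ENNReal.ofReal (‖ζ‖ ^ (-(d:ℝ))) ∂μ := lintegral_mono_set hcover
    _ ≤ ∑' k, ∫⁻ ζ in D k, ENNReal.ofReal (‖ζ‖ ^ (-(d:ℝ))) ∂μ := lintegral_iUnion_le _ _
    _ = ∑ k ∈ Finset.range K, ∫⁻ ζ in D k, ENNReal.ofReal (‖ζ‖ ^ (-(d:ℝ))) ∂μ := by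
        refine tsum_eq_sum fun k hk => ?_
        rw [hDempty k (by simpa using hk)]
        simp
    _ ≤ ∑ _k ∈ Finset.range K, (ENNReal.ofReal (2 ^ ((d:ℝ))) * μ (ball 0 1)) :=
        Finset.sum_le_sum fun k _ => hterm k
    _ = (K : ℝ≥0∞) * (ENNReal.ofReal (2 ^ ((d:ℝ))) * μ (ball 0 1)) := by
        simp [Finset.sum_const, nsmul_eq_mul]

lemma translate_setLIntegral (z : E) (f : E → ℝ≥0∞) (s : Set E) :
    ∫⁻ ζ in s, f (ζ - z) ∂μ = ∫⁻ w in (fun w => w + z) ⁻¹' s, f w ∂μ := by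
  have hemb : MeasurableEmbedding (fun w : E => w + z) :=
    (MeasurableEquiv.addRight z).measurableEmbedding
  have h := (measurePreserving_add_right μ z).setLIntegral_comp_preimage_emb
      hemb (fun ζ => f (ζ - z)) s
  simp only [add_sub_cancel_right] at h
  exact h.symm

end Aux

section Aux2

lemma measurable_ofReal_norm_rpow {E : Type*} [NormedAddCommGroup E] [MeasurableSpace E]
    [OpensMeasurableSpace E] {c : ℝ} (hc : c ≠ 0) :
    Measurable (fun x : E => ENNReal.ofReal (‖x‖ ^ c)) := by
  have heq : (fun x : E => ENNReal.ofReal (‖x‖ ^ c)) = fun x =>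
      ENNReal.ofReal (if ‖x‖ = 0 then 0 else Real.exp (Real.log ‖x‖ * c)) := by
    funext x
    congr 1
    by_cases h : ‖x‖ = 0
    · simp [h, Real.zero_rpow hc]
    · rw [if_neg h, Real.rpow_def_of_pos (lt_of_le_of_ne (norm_nonneg x) (Ne.symm h))]
  rw [heq]
  refine Measurable.ennreal_ofReal ?_
  refine Measurable.ite (measurableSet_eq_fun measurable_norm measurable_const)
    measurable_const ?_
  exact Real.measurable_exp.comp ((Real.measurable_log.comp measurable_norm).mul_const c)

lemma ofReal_one_sub_inv {x : ℝ} (hx0 : 0 ≤ x) (hx1 : x < 1) :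
    ((1 : ℝ≥0∞) - ENNReal.ofReal x)⁻¹ = ENNReal.ofReal ((1 - x)⁻¹) := by
  rw [← ENNReal.ofReal_one, ← ENNReal.ofReal_sub _ hx0,
    ← ENNReal.ofReal_inv_of_pos (by linarith)]

end Aux2

set_option maxHeartbeats 2000000 in
/-- for a bounded domain `Ω ⊆ ℂⁿ` and `α, β > 0` with `α + β = 2n`, there is
`C > 0` with `∫_Ω |ζ|^{-α} |ζ - z|^{-β} dv_ζ ≤ C (1 + |ln |z||)` for every `z ∈ Ω`, `z ≠ 0`. -/
theorem stmt6 (n : ℕ) (hn : 1 ≤ n) (Ω : Set (EuclideanSpace ℂ (Fin n)))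
    (hΩo : IsOpen Ω) (hΩc : IsConnected Ω) (hΩb : Bornology.IsBounded Ω)
    (α β : ℝ) (hα : 0 < α) (hβ : 0 < β) (hαβ : α + β = 2 * n) :
    ∃ C : ℝ, 0 < C ∧ ∀ z ∈ Ω, z ≠ 0 →
      ∫⁻ ζ in Ω, ENNReal.ofReal (‖ζ‖ ^ (-α) * ‖ζ - z‖ ^ (-β)) ≤
        ENNReal.ofReal (C * (1 + |Real.log ‖z‖|)) := by
  haveI : Nonempty (Fin n) := ⟨⟨0, hn⟩⟩
  haveI : Nontrivial (EuclideanSpace ℂ (Fin n)) := inferInstance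
  haveI hHaar : (volume : Measure (EuclideanSpace ℂ (Fin n))).IsAddHaarMeasure := by
    have h : (volume : Measure (EuclideanSpace ℂ (Fin n))) =
        Measure.map (⇑(PiLp.continuousLinearEquiv 2 ℝ (fun _ : Fin n => ℂ)).symm) volume := rfl
    rw [h]
    exact (PiLp.continuousLinearEquiv 2 ℝ (fun _ : Fin n => ℂ)).symm.isAddHaarMeasure_map volume
  have hd2 : Module.finrank ℝ (EuclideanSpace ℂ (Fin n)) = 2 * n := by
    rw [← Module.finrank_mul_finrank ℝ ℂ (EuclideanSpace ℂ (Fin n)), Complex.finrank_real_complex,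
      finrank_euclideanSpace, Fintype.card_fin]
  have hdR : ((Module.finrank ℝ (EuclideanSpace ℂ (Fin n))) : ℝ) = α + β := by
    rw [hd2]; push_cast; linarith
  -- the radius R
  obtain ⟨R₀, hR₀⟩ := hΩb.subset_closedBall 0
  set R : ℝ := max R₀ 0 + 1 with hRdef
  have hR1 : 1 ≤ R := le_add_of_nonneg_left (le_max_right _ _)
  have hRpos : 0 < R := lt_of_lt_of_le one_pos hR1
  have hΩR : Ω ⊆ ball 0 R := hR₀.trans (closedBall_subset_ball
    (lt_of_le_of_lt (le_max_left _ _) (by linarith)))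
  -- constants
  set B1r : ℝ := (volume (ball (0 : EuclideanSpace ℂ (Fin n)) 1)).toReal with hB1rdef
  have hB1top : volume (ball (0 : EuclideanSpace ℂ (Fin n)) 1) ≠ ⊤ := measure_ball_lt_top.ne
  have hB1 : volume (ball (0 : EuclideanSpace ℂ (Fin n)) 1) = ENNReal.ofReal B1r :=
    (ENNReal.ofReal_toReal hB1top).symm
  have hB1rnn : 0 ≤ B1r := ENNReal.toReal_nonneg
  have hx1 : (2:ℝ) ^ (α - ((Module.finrank ℝ (EuclideanSpace ℂ (Fin n))) : ℝ)) < 1 :=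
    Real.rpow_lt_one_of_one_lt_of_neg one_lt_two (by rw [hdR]; linarith)
  have hx2 : (2:ℝ) ^ (β - ((Module.finrank ℝ (EuclideanSpace ℂ (Fin n))) : ℝ)) < 1 :=
    Real.rpow_lt_one_of_one_lt_of_neg one_lt_two (by rw [hdR]; linarith)
  set q1 : ℝ := (1 - (2:ℝ) ^ (α - ((Module.finrank ℝ (EuclideanSpace ℂ (Fin n))) : ℝ)))⁻¹ with hq1def
  set q2 : ℝ := (1 - (2:ℝ) ^ (β - ((Module.finrank ℝ (EuclideanSpace ℂ (Fin n))) : ℝ)))⁻¹ with hq2def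
  have hq1 : 0 < q1 := inv_pos.2 (by linarith)
  have hq2 : 0 < q2 := inv_pos.2 (by linarith)
  set c1r : ℝ := 2 ^ α * q1 * B1r with hc1def
  set c2r : ℝ := 2 ^ β * q2 * B1r with hc2def
  set c3r : ℝ := 2 ^ ((Module.finrank ℝ (EuclideanSpace ℂ (Fin n))) : ℝ) * B1r with hc3def
  have hc1 : 0 ≤ c1r := mul_nonneg (mul_nonneg (Real.rpow_pos_of_pos two_pos _).le hq1.le) hB1rnn
  have hc2 : 0 ≤ c2r := mul_nonneg (mul_nonneg (Real.rpow_pos_of_pos two_pos _).le hq2.le) hB1rnn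
  have hc3 : 0 ≤ c3r := mul_nonneg (Real.rpow_pos_of_pos two_pos _).le hB1rnn
  have hlog2 : 0 < Real.log 2 := Real.log_pos one_lt_two
  have hlog4R : 0 ≤ Real.log (4 * R) := Real.log_nonneg (by linarith)
  set M : ℝ := Real.log (4 * R) / Real.log 2 + 1 with hMdef
  have hM : 0 < M := by positivity
  refine ⟨c1r + c2r + 2 * c3r * M + 2 * c3r / Real.log 2 + 1, by positivity, ?_⟩
  intro z hz hz0
  set r : ℝ := ‖z‖ with hrdef
  have hr0 : 0 < r := norm_pos_iff.2 hz0
  have hrR : r < R := mem_ball_zero_iff.1 (hΩR hz)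
  have hr2 : 0 < r / 2 := by positivity
  set C : ℝ := c1r + c2r + 2 * c3r * M + 2 * c3r / Real.log 2 + 1 with hCdef
  -- the three regions
  set S1 : Set (EuclideanSpace ℂ (Fin n)) := Ω ∩ ball 0 (r/2) with hS1def
  set S2 : Set (EuclideanSpace ℂ (Fin n)) := Ω ∩ ball z (r/2) with hS2def
  set S3 : Set (EuclideanSpace ℂ (Fin n)) := Ω \ (ball 0 (r/2) ∪ ball z (r/2)) with hS3def
  have hcover : Ω ⊆ S1 ∪ (S2 ∪ S3) := by
    intro ζ hζ
    by_cases h1 : ζ ∈ ball (0 : EuclideanSpace ℂ (Fin n)) (r/2)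
    · exact Or.inl ⟨hζ, h1⟩
    by_cases h2 : ζ ∈ ball z (r/2)
    · exact Or.inr (Or.inl ⟨hζ, h2⟩)
    · exact Or.inr (Or.inr ⟨hζ, fun h => h.elim h1 h2⟩)
  -- region 1
  have hS1b : ∫⁻ ζ in S1, ENNReal.ofReal (‖ζ‖ ^ (-α) * ‖ζ - z‖ ^ (-β)) ≤
      ENNReal.ofReal c1r := by
    have hpt : ∀ ζ ∈ S1, ENNReal.ofReal (‖ζ‖ ^ (-α) * ‖ζ - z‖ ^ (-β)) ≤
        ENNReal.ofReal ((r/2) ^ (-β)) * ENNReal.ofReal (‖ζ‖ ^ (-α)) := by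
      intro ζ hζ
      have h1 : ‖ζ‖ < r/2 := mem_ball_zero_iff.1 hζ.2
      have h2 : ‖z‖ ≤ ‖ζ‖ + ‖ζ - z‖ := by
        have := norm_sub_le ζ (ζ - z)
        rwa [sub_sub_cancel] at this
      have hzd : r/2 ≤ ‖ζ - z‖ := by rw [hrdef] at *; linarith
      rw [← ENNReal.ofReal_mul (Real.rpow_nonneg (by positivity) _)]
      refine ENNReal.ofReal_le_ofReal ?_
      calc ‖ζ‖ ^ (-α) * ‖ζ - z‖ ^ (-β) ≤ ‖ζ‖ ^ (-α) * (r/2) ^ (-β) :=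
            mul_le_mul_of_nonneg_left
              (Real.rpow_le_rpow_of_nonpos hr2 hzd (by linarith)) (Real.rpow_nonneg (norm_nonneg _) _)
        _ = (r/2) ^ (-β) * ‖ζ‖ ^ (-α) := mul_comm _ _
    calc ∫⁻ ζ in S1, ENNReal.ofReal (‖ζ‖ ^ (-α) * ‖ζ - z‖ ^ (-β))
        ≤ ∫⁻ ζ in S1, ENNReal.ofReal ((r/2) ^ (-β)) * ENNReal.ofReal (‖ζ‖ ^ (-α)) :=
          setLIntegral_mono' (hΩo.measurableSet.inter measurableSet_ball) hpt
      _ ≤ ∫⁻ ζ in ball (0 : EuclideanSpace ℂ (Fin n)) (r/2),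
            ENNReal.ofReal ((r/2) ^ (-β)) * ENNReal.ofReal (‖ζ‖ ^ (-α)) :=
          lintegral_mono_set Set.inter_subset_right
      _ = ENNReal.ofReal ((r/2) ^ (-β)) * ∫⁻ ζ in ball (0 : EuclideanSpace ℂ (Fin n)) (r/2),
            ENNReal.ofReal (‖ζ‖ ^ (-α)) := lintegral_const_mul' _ _ ENNReal.ofReal_ne_top
      _ ≤ ENNReal.ofReal ((r/2) ^ (-β)) *
          (ENNReal.ofReal (2 ^ α)
            * (1 - ENNReal.ofReal (2 ^ (α - ((Module.finrank ℝ (EuclideanSpace ℂ (Fin n))) : ℝ))))⁻¹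
            * volume (ball (0 : EuclideanSpace ℂ (Fin n)) 1)
            * ENNReal.ofReal ((r/2) ^ (((Module.finrank ℝ (EuclideanSpace ℂ (Fin n))) : ℝ) - α))) := by
          gcongr
          exact lemA volume hα hr2
      _ = ENNReal.ofReal c1r := by
          rw [hB1, ofReal_one_sub_inv (Real.rpow_nonneg two_pos.le _) hx1,
            ← ENNReal.ofReal_mul (Real.rpow_nonneg two_pos.le _),
            ← ENNReal.ofReal_mul (by positivity),
            ← ENNReal.ofReal_mul (by positivity),
            ← ENNReal.ofReal_mul (Real.rpow_nonneg (by positivity) _)]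
          congr 1
          have he : ((Module.finrank ℝ (EuclideanSpace ℂ (Fin n))) : ℝ) - α = β := by
            rw [hdR]; ring
          rw [he, hc1def, hq1def]
          have hone : (r/2) ^ (-β) * (r/2) ^ β = 1 := by
            rw [← Real.rpow_add hr2]; simp
          nlinarith [hone]
  -- region 2
  have hS2b : ∫⁻ ζ in S2, ENNReal.ofReal (‖ζ‖ ^ (-α) * ‖ζ - z‖ ^ (-β)) ≤
      ENNReal.ofReal c2r := by
    have hpt : ∀ ζ ∈ S2, ENNReal.ofReal (‖ζ‖ ^ (-α) * ‖ζ - z‖ ^ (-β)) ≤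
        ENNReal.ofReal ((r/2) ^ (-α)) * ENNReal.ofReal (‖ζ - z‖ ^ (-β)) := by
      intro ζ hζ
      have h1 : ‖ζ - z‖ < r/2 := by
        have := mem_ball_iff_norm.1 hζ.2
        simpa using this
      have h2 : ‖z‖ ≤ ‖ζ - z‖ + ‖ζ‖ := by
        have := norm_sub_le (ζ - z) ζ
        rwa [sub_sub_cancel_left, norm_neg] at this
      have hzn : r/2 ≤ ‖ζ‖ := by rw [hrdef] at *; linarith
      rw [← ENNReal.ofReal_mul (Real.rpow_nonneg (by positivity) _)]
      refine ENNReal.ofReal_le_ofReal ?_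
      exact mul_le_mul_of_nonneg_right
        (Real.rpow_le_rpow_of_nonpos hr2 hzn (by linarith)) (Real.rpow_nonneg (norm_nonneg _) _)
    have hpre : (fun w : EuclideanSpace ℂ (Fin n) => w + z) ⁻¹' ball z (r/2) = ball 0 (r/2) := by
      ext w
      simp [mem_ball, dist_eq_norm, add_sub_cancel_right]
    calc ∫⁻ ζ in S2, ENNReal.ofReal (‖ζ‖ ^ (-α) * ‖ζ - z‖ ^ (-β))
        ≤ ∫⁻ ζ in S2, ENNReal.ofReal ((r/2) ^ (-α)) * ENNReal.ofReal (‖ζ - z‖ ^ (-β)) :=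
          setLIntegral_mono' (hΩo.measurableSet.inter measurableSet_ball) hpt
      _ ≤ ∫⁻ ζ in ball z (r/2),
            ENNReal.ofReal ((r/2) ^ (-α)) * ENNReal.ofReal (‖ζ - z‖ ^ (-β)) :=
          lintegral_mono_set Set.inter_subset_right
      _ = ENNReal.ofReal ((r/2) ^ (-α)) * ∫⁻ ζ in ball z (r/2),
            ENNReal.ofReal (‖ζ - z‖ ^ (-β)) := lintegral_const_mul' _ _ ENNReal.ofReal_ne_top
      _ = ENNReal.ofReal ((r/2) ^ (-α)) * ∫⁻ w in ball (0 : EuclideanSpace ℂ (Fin n)) (r/2),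
            ENNReal.ofReal (‖w‖ ^ (-β)) := by
          rw [translate_setLIntegral volume z (fun w => ENNReal.ofReal (‖w‖ ^ (-β))), hpre]
      _ ≤ ENNReal.ofReal ((r/2) ^ (-α)) *
          (ENNReal.ofReal (2 ^ β)
            * (1 - ENNReal.ofReal (2 ^ (β - ((Module.finrank ℝ (EuclideanSpace ℂ (Fin n))) : ℝ))))⁻¹
            * volume (ball (0 : EuclideanSpace ℂ (Fin n)) 1)
            * ENNReal.ofReal ((r/2) ^ (((Module.finrank ℝ (EuclideanSpace ℂ (Fin n))) : ℝ) - β))) := by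
          gcongr
          exact lemA volume hβ hr2
      _ = ENNReal.ofReal c2r := by
          rw [hB1, ofReal_one_sub_inv (Real.rpow_nonneg two_pos.le _) hx2,
            ← ENNReal.ofReal_mul (Real.rpow_nonneg two_pos.le _),
            ← ENNReal.ofReal_mul (by positivity),
            ← ENNReal.ofReal_mul (by positivity),
            ← ENNReal.ofReal_mul (Real.rpow_nonneg (by positivity) _)]
          congr 1
          have he : ((Module.finrank ℝ (EuclideanSpace ℂ (Fin n))) : ℝ) - β = α := by
            rw [hdR]; ring
          rw [he, hc2def, hq2def]
          have hone : (r/2) ^ (-α) * (r/2) ^ α = 1 := by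
            rw [← Real.rpow_add hr2]; simp
          nlinarith [hone]
  -- region 3
  set K1 : ℕ := ⌈Real.logb 2 (R / (r/2))⌉₊ with hK1def
  set K2 : ℕ := ⌈Real.logb 2 ((2*R) / (r/2))⌉₊ with hK2def
  have hS3b : ∫⁻ ζ in S3, ENNReal.ofReal (‖ζ‖ ^ (-α) * ‖ζ - z‖ ^ (-β)) ≤
      (ENNReal.ofReal (K1 : ℝ) + ENNReal.ofReal (K2 : ℝ)) * ENNReal.ofReal c3r := by
    have hdne : ((Module.finrank ℝ (EuclideanSpace ℂ (Fin n))) : ℝ) ≠ 0 := by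
      rw [hdR]; linarith
    have hpt : ∀ ζ ∈ S3, ENNReal.ofReal (‖ζ‖ ^ (-α) * ‖ζ - z‖ ^ (-β)) ≤
        ENNReal.ofReal (‖ζ‖ ^ (-((Module.finrank ℝ (EuclideanSpace ℂ (Fin n))) : ℝ)))
        + ENNReal.ofReal (‖ζ - z‖ ^ (-((Module.finrank ℝ (EuclideanSpace ℂ (Fin n))) : ℝ))) := by
      intro ζ hζ
      have ha : r/2 ≤ ‖ζ‖ := by
        by_contra h
        exact hζ.2 (Or.inl (mem_ball_zero_iff.2 (by linarith)))
      have hb : r/2 ≤ ‖ζ - z‖ := by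
        by_contra h
        exact hζ.2 (Or.inr (mem_ball_iff_norm.2 (by push_neg at h; simpa using h)))
      have hya : 0 < ‖ζ‖ := lt_of_lt_of_le hr2 ha
      have hyb : 0 < ‖ζ - z‖ := lt_of_lt_of_le hr2 hb
      calc ENNReal.ofReal (‖ζ‖ ^ (-α) * ‖ζ - z‖ ^ (-β))
          ≤ ENNReal.ofReal (‖ζ‖ ^ (-(α+β)) + ‖ζ - z‖ ^ (-(α+β))) :=
            ENNReal.ofReal_le_ofReal (young_ineq hya hyb hα hβ)
        _ = _ := by
            rw [ENNReal.ofReal_add (Real.rpow_nonneg hya.le _) (Real.rpow_nonneg hyb.le _), hdR]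
    have hmeas : Measurable (fun ζ : EuclideanSpace ℂ (Fin n) =>
        ENNReal.ofReal (‖ζ‖ ^ (-((Module.finrank ℝ (EuclideanSpace ℂ (Fin n))) : ℝ)))) :=
      measurable_ofReal_norm_rpow (neg_ne_zero.2 hdne)
    have hterm1 : ∫⁻ ζ in S3,
        ENNReal.ofReal (‖ζ‖ ^ (-((Module.finrank ℝ (EuclideanSpace ℂ (Fin n))) : ℝ)))
          ≤ ENNReal.ofReal (K1 : ℝ) * ENNReal.ofReal c3r := by
      calc ∫⁻ ζ in S3,
          ENNReal.ofReal (‖ζ‖ ^ (-((Module.finrank ℝ (EuclideanSpace ℂ (Fin n))) : ℝ)))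
          ≤ ∫⁻ ζ in {ζ : EuclideanSpace ℂ (Fin n) | r/2 ≤ ‖ζ‖} ∩ ball 0 R,
            ENNReal.ofReal (‖ζ‖ ^ (-((Module.finrank ℝ (EuclideanSpace ℂ (Fin n))) : ℝ))) := by
            refine lintegral_mono_set fun ζ hζ =>
              ⟨not_lt.1 fun h => hζ.2 (Or.inl (mem_ball_zero_iff.2 h)), hΩR hζ.1⟩
        _ ≤ (K1 : ℝ≥0∞) * (ENNReal.ofReal
              (2 ^ ((Module.finrank ℝ (EuclideanSpace ℂ (Fin n))) : ℝ)) * volume (ball (0 : EuclideanSpace ℂ (Fin n)) 1)) :=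
            lemB volume hr2 (by linarith)
        _ = ENNReal.ofReal (K1 : ℝ) * ENNReal.ofReal c3r := by
            rw [hB1, ← ENNReal.ofReal_mul (Real.rpow_nonneg two_pos.le _),
              ENNReal.ofReal_natCast]
    have hterm2 : ∫⁻ ζ in S3,
        ENNReal.ofReal (‖ζ - z‖ ^ (-((Module.finrank ℝ (EuclideanSpace ℂ (Fin n))) : ℝ)))
          ≤ ENNReal.ofReal (K2 : ℝ) * ENNReal.ofReal c3r := by
      rw [translate_setLIntegral volume z
        (fun w => ENNReal.ofReal (‖w‖ ^ (-((Module.finrank ℝ (EuclideanSpace ℂ (Fin n))) : ℝ)))) S3]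
      calc ∫⁻ w in (fun w : EuclideanSpace ℂ (Fin n) => w + z) ⁻¹' S3,
          ENNReal.ofReal (‖w‖ ^ (-((Module.finrank ℝ (EuclideanSpace ℂ (Fin n))) : ℝ)))
          ≤ ∫⁻ w in {w : EuclideanSpace ℂ (Fin n) | r/2 ≤ ‖w‖} ∩ ball 0 (2*R),
            ENNReal.ofReal (‖w‖ ^ (-((Module.finrank ℝ (EuclideanSpace ℂ (Fin n))) : ℝ))) := by
            refine lintegral_mono_set fun w hw => ⟨not_lt.1 fun h =>
              hw.2 (Or.inr (mem_ball_iff_norm.2 (by rwa [add_sub_cancel_right]))), ?_⟩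
            · rw [mem_ball_zero_iff]
              have h1 : ‖w + z‖ < R := mem_ball_zero_iff.1 (hΩR hw.1)
              have h2 : ‖w‖ ≤ ‖w + z‖ + ‖z‖ := by
                have := norm_sub_le (w + z) z
                rwa [add_sub_cancel_right] at this
              rw [hrdef] at hrR
              linarith
        _ ≤ (K2 : ℝ≥0∞) * (ENNReal.ofReal
              (2 ^ ((Module.finrank ℝ (EuclideanSpace ℂ (Fin n))) : ℝ)) * volume (ball (0 : EuclideanSpace ℂ (Fin n)) 1)) :=
            lemB volume hr2 (by linarith)
        _ = ENNReal.ofReal (K2 : ℝ) * ENNReal.ofReal c3r := by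
            rw [hB1, ← ENNReal.ofReal_mul (Real.rpow_nonneg two_pos.le _),
              ENNReal.ofReal_natCast]
    calc ∫⁻ ζ in S3, ENNReal.ofReal (‖ζ‖ ^ (-α) * ‖ζ - z‖ ^ (-β))
        ≤ ∫⁻ ζ in S3,
            (ENNReal.ofReal (‖ζ‖ ^ (-((Module.finrank ℝ (EuclideanSpace ℂ (Fin n))) : ℝ)))
            + ENNReal.ofReal (‖ζ - z‖ ^ (-((Module.finrank ℝ (EuclideanSpace ℂ (Fin n))) : ℝ)))) :=
          setLIntegral_mono' (hΩo.measurableSet.diff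
            (measurableSet_ball.union measurableSet_ball)) hpt
      _ = (∫⁻ ζ in S3,
            ENNReal.ofReal (‖ζ‖ ^ (-((Module.finrank ℝ (EuclideanSpace ℂ (Fin n))) : ℝ))))
          + ∫⁻ ζ in S3,
            ENNReal.ofReal (‖ζ - z‖ ^ (-((Module.finrank ℝ (EuclideanSpace ℂ (Fin n))) : ℝ))) :=
          lintegral_add_left hmeas _
      _ ≤ ENNReal.ofReal (K1 : ℝ) * ENNReal.ofReal c3r
          + ENNReal.ofReal (K2 : ℝ) * ENNReal.ofReal c3r := add_le_add hterm1 hterm2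
      _ = _ := by ring
  -- combine
  have hK1b : (K1 : ℝ) ≤ M + |Real.log r| / Real.log 2 := by
    have hu : R / (r/2) = 2*R/r := by field_simp
    have hu1 : 1 ≤ R / (r/2) := (one_le_div hr2).2 (by linarith)
    have hlogbnn : 0 ≤ Real.logb 2 (R / (r/2)) := Real.logb_nonneg one_lt_two hu1
    have hceil : (K1 : ℝ) ≤ Real.logb 2 (R / (r/2)) + 1 := (Nat.ceil_lt_add_one hlogbnn).le
    have hlog : Real.log (R / (r/2)) ≤ Real.log (4*R) + |Real.log r| := by
      rw [hu, Real.log_div (by positivity) hr0.ne']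
      have h1 : Real.log (2*R) ≤ Real.log (4*R) := Real.log_le_log (by positivity) (by linarith)
      have h2 : -Real.log r ≤ |Real.log r| := neg_le_abs _
      linarith
    have : Real.logb 2 (R / (r/2)) ≤ Real.log (4*R) / Real.log 2 + |Real.log r| / Real.log 2 := by
      rw [Real.logb, ← add_div]
      exact div_le_div_of_nonneg_right hlog hlog2.le
    rw [hMdef]
    linarith
  have hK2b : (K2 : ℝ) ≤ M + |Real.log r| / Real.log 2 := by
    have hu : (2*R) / (r/2) = 4*R/r := by field_simp; ring
    have hu1 : 1 ≤ (2*R) / (r/2) := (one_le_div hr2).2 (by linarith)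
    have hlogbnn : 0 ≤ Real.logb 2 ((2*R) / (r/2)) := Real.logb_nonneg one_lt_two hu1
    have hceil : (K2 : ℝ) ≤ Real.logb 2 ((2*R) / (r/2)) + 1 := (Nat.ceil_lt_add_one hlogbnn).le
    have hlog : Real.log ((2*R) / (r/2)) ≤ Real.log (4*R) + |Real.log r| := by
      rw [hu, Real.log_div (by positivity) hr0.ne']
      have h2 : -Real.log r ≤ |Real.log r| := neg_le_abs _
      linarith
    have : Real.logb 2 ((2*R) / (r/2)) ≤ Real.log (4*R) / Real.log 2 + |Real.log r| / Real.log 2 := by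
      rw [Real.logb, ← add_div]
      exact div_le_div_of_nonneg_right hlog hlog2.le
    rw [hMdef]
    linarith
  have hfinal : c1r + (c2r + ((K1 : ℝ) + (K2 : ℝ)) * c3r) ≤ C * (1 + |Real.log r|) := by
    clear_value C M c3r c2r c1r
    have habs : 0 ≤ |Real.log r| := abs_nonneg _
    have e1 : ((K1 : ℝ) + (K2 : ℝ)) * c3r ≤ (2*M + 2*(|Real.log r| / Real.log 2)) * c3r :=
      mul_le_mul_of_nonneg_right (by linarith) hc3
    have e2 : (2*M + 2*(|Real.log r| / Real.log 2)) * c3r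
        = 2*c3r*M + (2*c3r/Real.log 2) * |Real.log r| := by
      field_simp
    have e3 : (2*c3r/Real.log 2) * |Real.log r| ≤ C * |Real.log r| := by
      refine mul_le_mul_of_nonneg_right ?_ habs
      rw [hCdef]
      have : 0 ≤ 2*c3r*M := by positivity
      linarith
    have e4 : c1r + c2r + 2*c3r*M ≤ C := by
      rw [hCdef]
      have : 0 ≤ 2*c3r/Real.log 2 := by positivity
      linarith
    calc c1r + (c2r + ((K1 : ℝ) + (K2 : ℝ)) * c3r)
        ≤ c1r + c2r + (2*c3r*M + (2*c3r/Real.log 2) * |Real.log r|) := by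
          rw [← e2]; linarith
      _ ≤ C + C * |Real.log r| := by nlinarith [e3, e4]
      _ = C * (1 + |Real.log r|) := by ring
  calc ∫⁻ ζ in Ω, ENNReal.ofReal (‖ζ‖ ^ (-α) * ‖ζ - z‖ ^ (-β))
      ≤ ∫⁻ ζ in S1 ∪ (S2 ∪ S3), ENNReal.ofReal (‖ζ‖ ^ (-α) * ‖ζ - z‖ ^ (-β)) :=
        lintegral_mono_set hcover
    _ ≤ (∫⁻ ζ in S1, ENNReal.ofReal (‖ζ‖ ^ (-α) * ‖ζ - z‖ ^ (-β)))
        + ∫⁻ ζ in S2 ∪ S3, ENNReal.ofReal (‖ζ‖ ^ (-α) * ‖ζ - z‖ ^ (-β)) :=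
        lintegral_union_le _ _ _
    _ ≤ (∫⁻ ζ in S1, ENNReal.ofReal (‖ζ‖ ^ (-α) * ‖ζ - z‖ ^ (-β)))
        + ((∫⁻ ζ in S2, ENNReal.ofReal (‖ζ‖ ^ (-α) * ‖ζ - z‖ ^ (-β)))
          + ∫⁻ ζ in S3, ENNReal.ofReal (‖ζ‖ ^ (-α) * ‖ζ - z‖ ^ (-β))) := by
        gcongr
        exact lintegral_union_le _ _ _
    _ ≤ ENNReal.ofReal c1r + (ENNReal.ofReal c2r
        + (ENNReal.ofReal (K1 : ℝ) + ENNReal.ofReal (K2 : ℝ)) * ENNReal.ofReal c3r) := by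
        gcongr
    _ = ENNReal.ofReal (c1r + (c2r + ((K1 : ℝ) + (K2 : ℝ)) * c3r)) := by
        rw [← ENNReal.ofReal_add (Nat.cast_nonneg _) (Nat.cast_nonneg _),
          ← ENNReal.ofReal_mul (by positivity),
          ← ENNReal.ofReal_add hc2 (by positivity),
          ← ENNReal.ofReal_add hc1 (by positivity)]
    _ ≤ ENNReal.ofReal (C * (1 + |Real.log r|)) := ENNReal.ofReal_le_ofReal hfinal
end
end

section
/- Let N ≥ 1 and let f : ℝ → ℂ^N be infinitely differentiable with compact support contained in the open half-line (−∞, 0). Then for all real numbers λ and k, ∫_{−∞}^0 e^{−2λt} |f′(t) + k·f(t)|² dt ≥ (λ + k)² ∫_{−∞}^0 e^{−2λt} |f(t)|² dt. -/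
open MeasureTheory Filter Topology

attribute [local instance] InnerProductSpace.complexToReal

/-- for `f ∈ C_c^∞((-∞,0), ℂ^N)` and all `λ, k ∈ ℝ`,
`∫_{-∞}^0 e^{-2λt} |f'(t) + k f(t)|² dt ≥ (λ+k)² ∫_{-∞}^0 e^{-2λt} |f(t)|² dt`. -/
theorem stmt7 (N : ℕ) (hN : 1 ≤ N) (f : ℝ → EuclideanSpace ℂ (Fin N))
    (hf : ContDiff ℝ (⊤ : ℕ∞) f) (hsupp : HasCompactSupport f)
    (hsub : tsupport f ⊆ Set.Iio (0 : ℝ)) :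
    ∀ lam k : ℝ,
      (lam + k) ^ 2 * ∫ t in Set.Iio (0 : ℝ), Real.exp (-2 * lam * t) * ‖f t‖ ^ 2 ≤
        ∫ t in Set.Iio (0 : ℝ), Real.exp (-2 * lam * t) * ‖deriv f t + k • f t‖ ^ 2 := by
  intro lam k
  have hf1 : ContDiff ℝ 1 f := hf.of_le (by exact_mod_cast le_top)
  have hfd : Differentiable ℝ f := hf1.differentiable one_ne_zero
  have hfc : Continuous f := hf.continuous
  have hdc : Continuous (deriv f) := hf.continuous_deriv (by exact_mod_cast le_top)
  -- the auxiliary function φ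
  set φ : ℝ → ℝ := fun t => (lam + k) * (Real.exp (-2 * lam * t) * ‖f t‖ ^ 2) with hφdef
  have hφeq : φ = fun t => (lam + k) *
      (Real.exp (-2 * lam * t) * (inner ℝ (f t) (f t) : ℝ)) := by
    funext t
    simp [hφdef, real_inner_self_eq_norm_sq]
  have hφcd : ContDiff ℝ 1 φ := by
    rw [hφeq]
    exact contDiff_const.mul ((Real.contDiff_exp.comp
      ((contDiff_const.mul contDiff_id))).mul (hf1.inner ℝ hf1))
  have hφsupp : HasCompactSupport φ := by
    have : HasCompactSupport (fun t => ‖f t‖ ^ 2) :=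
      hsupp.comp_left (g := fun x => ‖x‖ ^ 2) (by simp)
    rw [hφdef]
    have h := this.mul_left (f := fun t => (lam + k) * Real.exp (-2 * lam * t))
    simpa only [Pi.mul_def, mul_assoc] using h
  -- derivative of φ
  have hφderiv : ∀ t, HasDerivAt φ
      ((lam + k) * ((-2 * lam) * Real.exp (-2 * lam * t) * (inner ℝ (f t) (f t) : ℝ)
        + Real.exp (-2 * lam * t) * (2 * (inner ℝ (deriv f t) (f t) : ℝ)))) t := by
    intro t
    rw [hφeq]
    have he : HasDerivAt (fun t => Real.exp (-2 * lam * t))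
        ((-2 * lam) * Real.exp (-2 * lam * t)) t := by
      have h0 : HasDerivAt (fun t : ℝ => -2 * lam * t) (-2 * lam) t := by
        simpa using (hasDerivAt_id t).const_mul (-2 * lam)
      simpa [mul_comm] using h0.exp
    have hi : HasDerivAt (fun t => (inner ℝ (f t) (f t) : ℝ))
        (2 * (inner ℝ (deriv f t) (f t) : ℝ)) t := by
      have := ((hfd t).hasDerivAt).inner ℝ ((hfd t).hasDerivAt)
      simpa [real_inner_comm, two_mul] using this
    have := (he.mul hi).const_mul (lam + k)
    simp only [Pi.mul_def] at this
    convert this using 1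
    try ring
  -- the pointwise identity
  have key : ∀ t, Real.exp (-2 * lam * t) * ‖deriv f t + k • f t‖ ^ 2
      = (lam + k) ^ 2 * (Real.exp (-2 * lam * t) * ‖f t‖ ^ 2) + deriv φ t
        + Real.exp (-2 * lam * t) * ‖deriv f t - lam • f t‖ ^ 2 := by
    intro t
    rw [(hφderiv t).deriv]
    have h1 : ‖deriv f t + k • f t‖ ^ 2
        = ‖deriv f t‖ ^ 2 + 2 * (k * (inner ℝ (deriv f t) (f t) : ℝ)) + k ^ 2 * ‖f t‖ ^ 2 := by
      rw [norm_add_sq_real, real_inner_smul_right, norm_smul]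
      simp [mul_pow]
      try ring
    have h2 : ‖deriv f t - lam • f t‖ ^ 2
        = ‖deriv f t‖ ^ 2 - 2 * (lam * (inner ℝ (deriv f t) (f t) : ℝ)) + lam ^ 2 * ‖f t‖ ^ 2 := by
      rw [norm_sub_sq_real, real_inner_smul_right, norm_smul]
      simp [mul_pow]
      try ring
    rw [h1, h2, real_inner_self_eq_norm_sq]
    ring
  -- integrability
  have hint : ∀ (g : ℝ → EuclideanSpace ℂ (Fin N)), Continuous g →
      HasCompactSupport g → Integrable (fun t => Real.exp (-2 * lam * t) * ‖g t‖ ^ 2) := by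
    intro g hgc hgs
    apply Continuous.integrable_of_hasCompactSupport
    · exact (Real.continuous_exp.comp (continuous_const.mul continuous_id)).mul
        ((hgc.norm).pow 2)
    · have : HasCompactSupport (fun t => ‖g t‖ ^ 2) :=
        hgs.comp_left (g := fun x => ‖x‖ ^ 2) (by simp)
      simpa [Pi.mul_def] using (this.mul_left (f := fun t => Real.exp (-2 * lam * t)))
  have hint1 : Integrable (fun t => Real.exp (-2 * lam * t) * ‖f t‖ ^ 2) :=
    hint f hfc hsupp
  have hsupp' : HasCompactSupport (deriv f) := hsupp.deriv
  have hsuppk : HasCompactSupport (fun t => deriv f t + k • f t) := by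
    have : HasCompactSupport (fun t => k • f t) :=
      hsupp.comp_left (g := fun x => k • x) (by simp)
    exact hsupp'.add this
  have hsuppl : HasCompactSupport (fun t => deriv f t - lam • f t) := by
    have h1 : HasCompactSupport (fun t => -(lam • f t)) :=
      hsupp.comp_left (g := fun x => -(lam • x)) (by simp)
    simpa [sub_eq_add_neg, Pi.add_def] using hsupp'.add h1
  have hint2 : Integrable (fun t => Real.exp (-2 * lam * t) * ‖deriv f t + k • f t‖ ^ 2) :=
    hint _ (hdc.add (hfc.const_smul k)) hsuppk
  have hint3 : Integrable (fun t => Real.exp (-2 * lam * t) * ‖deriv f t - lam • f t‖ ^ 2) :=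
    hint _ (hdc.sub (hfc.const_smul lam)) hsuppl
  have hφdc : Continuous (deriv φ) := hφcd.continuous_deriv le_rfl
  have hintφ : Integrable (deriv φ) :=
    hφdc.integrable_of_hasCompactSupport hφsupp.deriv
  -- the integral of deriv φ over Iio 0 is 0
  have hφ0 : φ 0 = 0 := by
    have : f 0 = 0 := image_eq_zero_of_notMem_tsupport (fun h => by
      simpa using hsub h)
    simp [hφdef, this]
  have hderiv_int : ∫ t in Set.Iio (0 : ℝ), deriv φ t = 0 := by
    rw [← integral_Iic_eq_integral_Iio]
    rw [HasCompactSupport.integral_Iic_deriv_eq hφcd hφsupp 0, hφ0]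
  -- put it together
  calc (lam + k) ^ 2 * ∫ t in Set.Iio (0 : ℝ), Real.exp (-2 * lam * t) * ‖f t‖ ^ 2
      ≤ (lam + k) ^ 2 * (∫ t in Set.Iio (0 : ℝ), Real.exp (-2 * lam * t) * ‖f t‖ ^ 2)
        + (∫ t in Set.Iio (0 : ℝ), deriv φ t)
        + ∫ t in Set.Iio (0 : ℝ), Real.exp (-2 * lam * t) * ‖deriv f t - lam • f t‖ ^ 2 := by
        rw [hderiv_int]
        have : 0 ≤ ∫ t in Set.Iio (0 : ℝ),
            Real.exp (-2 * lam * t) * ‖deriv f t - lam • f t‖ ^ 2 :=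
          setIntegral_nonneg measurableSet_Iio (fun t _ => by positivity)
        linarith
    _ = ∫ t in Set.Iio (0 : ℝ), ((lam + k) ^ 2 * (Real.exp (-2 * lam * t) * ‖f t‖ ^ 2)
          + deriv φ t + Real.exp (-2 * lam * t) * ‖deriv f t - lam • f t‖ ^ 2) := by
        have hA : IntegrableOn (fun t => (lam + k) ^ 2 *
            (Real.exp (-2 * lam * t) * ‖f t‖ ^ 2) + deriv φ t) (Set.Iio 0) :=
          ((hint1.const_mul _).add hintφ).integrableOn
        have hB : IntegrableOn (fun t => (lam + k) ^ 2 *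
            (Real.exp (-2 * lam * t) * ‖f t‖ ^ 2)) (Set.Iio 0) :=
          (hint1.const_mul _).integrableOn
        rw [integral_add hA hint3.integrableOn, integral_add hB hintφ.integrableOn,
          MeasureTheory.integral_const_mul]
    _ = ∫ t in Set.Iio (0 : ℝ), Real.exp (-2 * lam * t) * ‖deriv f t + k • f t‖ ^ 2 := by
        apply setIntegral_congr_fun measurableSet_Iio
        intro t _
        exact (key t).symm
end
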